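/- (Hessian identity for finite mixtures.) Let E be a finite-dimensional real normed vector space, K a positive integer, ρ_1,…,ρ_K > 0, and f_1,…,f_K : E → ℝ everywhere strictly positive and twice differentiable. Define p = ∑_{k=1}^K ρ_k·f_k, the local weights w_k(h) = ρ_k·f_k(h)/p(h), and the score b(h) = ∇(log ∘ p)(h). Then for every h ∈ E, the Hessian of log p satisfies ∇²(log ∘ p)(h) = ∑_{k=1}^K w_k(h) · [ ∇²(log ∘ f_k)(h) + ∇(log ∘ f_k)(h) ⊗ ∇(log ∘ f_k)(h) ] − b(h) ⊗ b(h), where u ⊗ v denotes the bilinear form (x,y) ↦ ⟨u,x⟩·⟨v,y⟩ (equivalently the outer product u·vᵀ in coordinates). -/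

import Mathlib

open scoped BigOperators

section MixtureHessianAux

variable {E : Type*} [NormedAddCommGroup E] [NormedSpace ℝ E]

private lemma mix_score_eq (g : E → ℝ) (hg : Differentiable ℝ g)
    (hgpos : ∀ x, 0 < g x) (x : E) :
    fderiv ℝ (fun y => Real.log (g y)) x = (g x)⁻¹ • fderiv ℝ g x :=
  (((hg x).hasFDerivAt.log (hgpos x).ne').fderiv)

private lemma mix_hess_log (g : E → ℝ) (hg : Differentiable ℝ g)
    (hg2 : Differentiable ℝ (fderiv ℝ g)) (hgpos : ∀ x, 0 < g x) (h : E) :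
    fderiv ℝ (fderiv ℝ (fun x => Real.log (g x))) h
      = (g h)⁻¹ • fderiv ℝ (fderiv ℝ g) h
        - ((g h)⁻¹ * (g h)⁻¹) • (fderiv ℝ g h).smulRight (fderiv ℝ g h) := by
  have e1 : fderiv ℝ (fun x => Real.log (g x)) = fun x => (g x)⁻¹ • fderiv ℝ g x := by
    funext x; exact mix_score_eq g hg hgpos x
  rw [e1]
  have hinv : HasFDerivAt (fun x => (g x)⁻¹)
      ((-((g h) ^ 2)⁻¹) • fderiv ℝ g h) h :=
    (hasDerivAt_inv (hgpos h).ne').comp_hasFDerivAt h (hg h).hasFDerivAt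
  have H := hinv.fun_smul (hg2 h).hasFDerivAt
  rw [H.fderiv]
  ext v w
  have hne := (hgpos h).ne'
  simp only [ContinuousLinearMap.add_apply, ContinuousLinearMap.smul_apply,
    ContinuousLinearMap.smulRight_apply, ContinuousLinearMap.sub_apply, smul_eq_mul]
  field_simp
  ring

private lemma mix_smulRight_smul_both (c : ℝ) (u v : E →L[ℝ] ℝ) :
    (c • u).smulRight ((c • v : E →L[ℝ] ℝ) : E →L[ℝ] ℝ) = (c * c) • u.smulRight v := by
  ext x y
  simp [ContinuousLinearMap.smulRight_apply, smul_eq_mul]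
  ring

end MixtureHessianAux

/-- **Hessian identity for finite mixtures.** For everywhere strictly positive,
twice differentiable `f_1,…,f_K : E → ℝ` and weights `ρ_k > 0`, the Hessian of
the log of the mixture `p = ∑_k ρ_k f_k` satisfies, with local weights
`w_k(h) = ρ_k f_k(h)/p(h)` and score `b(h) = ∇(log p)(h)`,
`∇²(log p)(h) = ∑_k w_k(h)[∇²(log f_k)(h) + ∇(log f_k)(h) ⊗ ∇(log f_k)(h)]
  − b(h) ⊗ b(h)`,
where `u ⊗ v` is the bilinear form `(x,y) ↦ u(x)·v(y)` (realized via
`ContinuousLinearMap.smulRight`). -/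
theorem mixture_hessian_identity (E : Type*) [NormedAddCommGroup E]
    [NormedSpace ℝ E] [FiniteDimensional ℝ E]
    (K : ℕ) (hK : 0 < K) (ρ : Fin K → ℝ) (hρ : ∀ k, 0 < ρ k)
    (f : Fin K → E → ℝ) (hfpos : ∀ k x, 0 < f k x)
    (hfdiff : ∀ k, Differentiable ℝ (f k))
    (hfdiff2 : ∀ k, Differentiable ℝ (fderiv ℝ (f k))) :
    ∀ h : E,
      fderiv ℝ (fderiv ℝ (fun x => Real.log (∑ k, ρ k * f k x))) h
        = (∑ k, (ρ k * f k h / (∑ j, ρ j * f j h)) •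
              (fderiv ℝ (fderiv ℝ (fun x => Real.log (f k x))) h
                + (fderiv ℝ (fun x => Real.log (f k x)) h).smulRight
                    (fderiv ℝ (fun x => Real.log (f k x)) h)))
          - (fderiv ℝ (fun x => Real.log (∑ k, ρ k * f k x)) h).smulRight
              (fderiv ℝ (fun x => Real.log (∑ k, ρ k * f k x)) h) := by
  intro h
  haveI : Nonempty (Fin K) := ⟨⟨0, hK⟩⟩
  set p : E → ℝ := fun x => ∑ k, ρ k * f k x with hp_def
  have hppos : ∀ x, 0 < p x := fun x =>
    Finset.sum_pos (fun k _ => mul_pos (hρ k) (hfpos k x)) Finset.univ_nonempty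
  have hpdiff : Differentiable ℝ p :=
    Differentiable.fun_sum fun k _ => (hfdiff k).const_mul (ρ k)
  have hDp : ∀ x, fderiv ℝ p x = ∑ k, ρ k • fderiv ℝ (f k) x := by
    intro x
    rw [hp_def, fderiv_fun_sum (fun k _ => ((hfdiff k x).const_mul (ρ k)))]
    exact Finset.sum_congr rfl fun k _ => fderiv_const_mul (hfdiff k x) (ρ k)
  have hDpfun : fderiv ℝ p = fun x => ∑ k, ρ k • fderiv ℝ (f k) x := funext hDp
  have hpdiff2 : Differentiable ℝ (fderiv ℝ p) := by
    rw [hDpfun]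
    exact Differentiable.fun_sum fun k _ => (hfdiff2 k).const_smul (ρ k)
  have hD2p : fderiv ℝ (fderiv ℝ p) h = ∑ k, ρ k • fderiv ℝ (fderiv ℝ (f k)) h := by
    rw [hDpfun, fderiv_fun_sum (fun k _ => ((hfdiff2 k h).fun_const_smul (ρ k)))]
    exact Finset.sum_congr rfl fun k _ => fderiv_fun_const_smul (hfdiff2 k h) (ρ k)
  -- LHS via hess_log for p
  have hLHS := mix_hess_log p hpdiff hpdiff2 hppos h
  -- each summand on RHS equals (f k h)⁻¹ • D² f k h
  have hterm : ∀ k : Fin K,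
      (fderiv ℝ (fderiv ℝ (fun x => Real.log (f k x))) h
        + (fderiv ℝ (fun x => Real.log (f k x)) h).smulRight
            (fderiv ℝ (fun x => Real.log (f k x)) h))
      = (f k h)⁻¹ • fderiv ℝ (fderiv ℝ (f k)) h := by
    intro k
    rw [mix_hess_log (f k) (hfdiff k) (hfdiff2 k) (hfpos k) h,
      mix_score_eq (f k) (hfdiff k) (hfpos k) h,
      mix_smulRight_smul_both]
    abel
  -- score of p
  have hscore : fderiv ℝ (fun x => Real.log (p x)) h = (p h)⁻¹ • fderiv ℝ p h :=
    mix_score_eq p hpdiff hppos h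
  calc fderiv ℝ (fderiv ℝ (fun x => Real.log (p x))) h
      = (p h)⁻¹ • fderiv ℝ (fderiv ℝ p) h
        - ((p h)⁻¹ * (p h)⁻¹) • (fderiv ℝ p h).smulRight (fderiv ℝ p h) := hLHS
    _ = (∑ k, (ρ k * f k h / p h) •
            (fderiv ℝ (fderiv ℝ (fun x => Real.log (f k x))) h
              + (fderiv ℝ (fun x => Real.log (f k x)) h).smulRight
                  (fderiv ℝ (fun x => Real.log (f k x)) h)))
          - (fderiv ℝ (fun x => Real.log (p x)) h).smulRight
              (fderiv ℝ (fun x => Real.log (p x)) h) := by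
        congr 1
        · rw [hD2p, Finset.smul_sum]
          refine Finset.sum_congr rfl fun k _ => ?_
          rw [hterm k, smul_smul, smul_smul]
          congr 1
          field_simp [(hfpos k h).ne', (hppos h).ne']
        · rw [hscore, mix_smulRight_smul_both]
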